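/- Consider the representation M of the equioriented type A_{2n−1} quiver with M_p = V for all 1 ≤ p ≤ 2n−1 and structure maps f′_p : M_p → M_{p+1} for 1 ≤ p ≤ 2n−2, and set M^0 := M_1 ⊕ ⋯ ⊕ M_{2n−1}. Then: (a) there exists a bilinear form ⟨−,−⟩ on M^0 which is nondegenerate, satisfies ⟨x,y⟩ = −⟨y,x⟩ for all x,y, satisfies ⟨M_p, M_q⟩ = 0 whenever p + q ≠ 2n, restricts on M_n × M_n to ω_V, and satisfies ⟨f′_p(x), y⟩ + ⟨x, f′_{2n−1−p}(y)⟩ = 0 for all 1 ≤ p ≤ 2n−2, x ∈ M_p and y ∈ M_{2n−1−p}; (b) for every such form ⟨−,−⟩, the map N ↦ (N_1,…,N_n) is a bijection from the set of Lagrangian subrepresentations N of M with dim N_p = p for all 1 ≤ p ≤ 2n−1 onto SpF^𝐢_{2n}; here a subrepresentation N of M is a family of subspaces N_p ⊆ M_p with f′_p(N_p) ⊆ N_{p+1} for all p, and N is Lagrangian if N_1 ⊕ ⋯ ⊕ N_{2n−1} equals {m ∈ M^0 : ⟨x, m⟩ = 0 for all x ∈ N_1 ⊕ ⋯ ⊕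 N_{2n−1}}. -/

import Mathlib

open Module

/-- `V = ℂ^{2n}`, with the standard basis `v_1, …, v_{2n}` given (0-indexed) by the
coordinate functions. -/
abbrev Vs (n : ℕ) := Fin (2 * n) → ℂ

open scoped Classical in
/-- The projection `pr_K` killing the coordinates in `K` (0-indexed: the basis vector
`v_{a+1}` corresponds to the coordinate `a`). -/
noncomputable def prK (N : ℕ) (K : Set (Fin N)) : (Fin N → ℂ) →ₗ[ℂ] (Fin N → ℂ) where
  toFun x := fun a => if a ∈ K then 0 else x a
  map_add' x y := by funext a; by_cases h : a ∈ K <;> simp [h]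
  map_smul' c x := by funext a; by_cases h : a ∈ K <;> simp [h]

/-- The symplectic form `ω_V` on `V = ℂ^{2n}`: `ω_V(v_a, v_b) = 0` unless
`a + b = 2n + 1` (1-indexed) and `ω_V(v_i, v_{2n+1-i}) = 1` for `1 ≤ i ≤ n`. -/
noncomputable def omegaV (n : ℕ) : LinearMap.BilinForm ℂ (Vs n) :=
  LinearMap.mk₂ ℂ
    (fun x y => ∑ a : Fin (2 * n), (if (a : ℕ) < n then (1 : ℂ) else -1) * (x a * y a.rev))
    (fun x x' y => by simp [add_mul, mul_add, Finset.sum_add_distrib])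
    (fun c x y => by simp [Finset.mul_sum, mul_assoc, mul_left_comm, mul_comm])
    (fun x y y' => by simp [mul_add, Finset.sum_add_distrib])
    (fun c x y => by simp [Finset.mul_sum, mul_assoc, mul_left_comm, mul_comm])

/-- The structure maps of linear degenerations: `f_k = pr_{{k+1}}` (killing the basis
vector `v_{k+1}`, which is the 0-indexed coordinate `k`) if `k ∈ J`, the identity
otherwise. -/
noncomputable def fdeg (n : ℕ) (J : Finset ℕ) (k : ℕ) : Vs n →ₗ[ℂ] Vs n :=
  if k ∈ J then prK (2 * n) {a | (a : ℕ) = k} else LinearMap.id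

/-- `𝐢′ = 𝐢 ∪ {2n-1-i : i ∈ 𝐢}`. -/
def Iprime (n : ℕ) (I : Finset ℕ) : Finset ℕ := I ∪ I.image (fun i => 2 * n - 1 - i)

/-- The linear degenerate symplectic flag variety `SpF^𝐢_{2n}`, as a set of tuples
`(V_1, …, V_n)` of subspaces of `V = ℂ^{2n}` (the tuple entry of index `k : Fin n`
is `V_{k+1}`). -/
noncomputable def SpF (n : ℕ) (I : Finset ℕ) : Set (Fin n → Submodule ℂ (Vs n)) :=
  {Vt | (∀ k : Fin n, finrank ℂ ↥(Vt k) = k.1 + 1) ∧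
    (∀ k : ℕ, ∀ hk : k + 1 < n,
      (Vt ⟨k, by omega⟩).map (fdeg n I (k + 1)) ≤ Vt ⟨k + 1, hk⟩) ∧
    (∀ h : n - 1 < n, Vt ⟨n - 1, h⟩ = (omegaV n).orthogonal (Vt ⟨n - 1, h⟩))}

/-- The linear degenerate flag variety `F^{J}_{2n}` for `J ⊆ {1, …, 2n-1}`, as a set
of tuples `(V_1, …, V_{2n-1})` of subspaces of `V = ℂ^{2n}`. -/
noncomputable def Fpr (n : ℕ) (J : Finset ℕ) : Set (Fin (2 * n - 1) → Submodule ℂ (Vs n)) :=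
  {Vt | (∀ k : Fin (2 * n - 1), finrank ℂ ↥(Vt k) = k.1 + 1) ∧
    (∀ k : ℕ, ∀ hk : k + 1 < 2 * n - 1,
      (Vt ⟨k, by omega⟩).map (fdeg n J (k + 1)) ≤ Vt ⟨k + 1, hk⟩)}
/-- The conditions of part (a) on a bilinear form `⟨-,-⟩` on
`M^0 = M_1 ⊕ ⋯ ⊕ M_{2n-1}`, where each `M_p = V` (0-indexed: the component `p` of a
tuple is `M_{p+1}`): nondegenerate, antisymmetric, `⟨M_p, M_q⟩ = 0` for `p + q ≠ 2n`,
restricting to `ω_V` on `M_n × M_n`, and satisfying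
`⟨f′_p(x), y⟩ + ⟨x, f′_{2n-1-p}(y)⟩ = 0` for `1 ≤ p ≤ 2n-2`, `x ∈ M_p`,
`y ∈ M_{2n-1-p}`. -/
def GoodForm (n : ℕ) (I : Finset ℕ)
    (B : LinearMap.BilinForm ℂ (Fin (2 * n - 1) → Vs n)) : Prop :=
  (∀ v, (∀ w, B v w = 0) → v = 0) ∧
  (∀ v w, B v w = - B w v) ∧
  (∀ p q : Fin (2 * n - 1), (p.1 + 1) + (q.1 + 1) ≠ 2 * n →
    ∀ v w : Vs n, B (Pi.single p v) (Pi.single q w) = 0) ∧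
  (∀ h : n - 1 < 2 * n - 1, ∀ v w : Vs n,
    B (Pi.single ⟨n - 1, h⟩ v) (Pi.single ⟨n - 1, h⟩ w) = omegaV n v w) ∧
  (∀ p : ℕ, ∀ hp1 : 1 ≤ p, ∀ hp2 : p ≤ 2 * n - 2, ∀ x y : Vs n,
    B (Pi.single (⟨p, by omega⟩ : Fin (2 * n - 1)) (fdeg n (Iprime n I) p x))
        (Pi.single (⟨2 * n - 2 - p, by omega⟩ : Fin (2 * n - 1)) y)
      + B (Pi.single (⟨p - 1, by omega⟩ : Fin (2 * n - 1)) x)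
          (Pi.single (⟨2 * n - 1 - p, by omega⟩ : Fin (2 * n - 1))
            (fdeg n (Iprime n I) (2 * n - 1 - p) y)) = 0)

section Aux

open LinearMap Module

/-! ### Generalities -/

lemma neg_one_pow_congr_mod {m k : ℕ} (h : m % 2 = k % 2) : ((-1 : ℂ)) ^ m = (-1) ^ k := by
  rcases Nat.even_or_odd m with hm | hm
  · have h1 := Nat.even_iff.mp hm
    rw [hm.neg_one_pow, (Nat.even_iff.mpr (by omega)).neg_one_pow]
  · have h1 := Nat.odd_iff.mp hm
    rw [hm.neg_one_pow, (Nat.odd_iff.mpr (by omega)).neg_one_pow]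

lemma orthogonal_congr {n : ℕ} {c c' : LinearMap.BilinForm ℂ (Vs n)}
    (h : ∀ v w, c v w = c' v w) (W : Submodule ℂ (Vs n)) :
    c.orthogonal W = c'.orthogonal W := by
  ext m
  simp only [LinearMap.BilinForm.mem_orthogonal_iff, LinearMap.BilinForm.isOrtho_def, h]

lemma single_mem_pi {n m : ℕ} {Nt : Fin m → Submodule ℂ (Vs n)} {p : Fin m} {v : Vs n}
    (hv : v ∈ Nt p) : Pi.single p v ∈ Submodule.pi Set.univ Nt := by
  rw [Submodule.mem_pi]
  intro i _
  rcases eq_or_ne i p with rfl | h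
  · rwa [Pi.single_eq_same]
  · rw [Pi.single_eq_of_ne h]
    exact (Nt i).zero_mem

/-- finrank of a one-sided orthogonal complement of a (right-)nondegenerate bilinear form. -/
lemma finrank_orthogonal {n : ℕ} (c : LinearMap.BilinForm ℂ (Vs n))
    (hc : ∀ w, (∀ v, c v w = 0) → w = 0) (W : Submodule ℂ (Vs n)) :
    finrank ℂ (c.orthogonal W) = 2 * n - finrank ℂ W := by
  have hinj : Function.Injective c.flip := by
    rw [← LinearMap.ker_eq_bot, LinearMap.ker_eq_bot']
    intro w hw
    exact hc w (fun v => by simpa using LinearMap.congr_fun hw v)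
  have hfr : finrank ℂ (Vs n) = finrank ℂ (Module.Dual ℂ (Vs n)) :=
    (Subspace.dual_finrank_eq).symm
  set e := c.flip.linearEquivOfInjective hinj hfr with he
  have horth : c.orthogonal W = W.dualAnnihilator.comap (e : Vs n →ₗ[ℂ] Module.Dual ℂ (Vs n)) := by
    ext m
    simp only [LinearMap.BilinForm.mem_orthogonal_iff, LinearMap.BilinForm.isOrtho_def,
      Submodule.mem_comap, Submodule.mem_dualAnnihilator, LinearEquiv.coe_coe, he,
      LinearMap.linearEquivOfInjective_apply, LinearMap.flip_apply]
    exact Iff.rfl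
  rw [horth, Submodule.comap_equiv_eq_map_symm, LinearEquiv.finrank_map_eq]
  have h1 : finrank ℂ ((Vs n) ⧸ W) + finrank ℂ W = 2 * n := by
    rw [Submodule.finrank_quotient_add_finrank]
    exact Module.finrank_fin_fun ℂ
  have h2 : finrank ℂ W.dualAnnihilator = finrank ℂ ((Vs n) ⧸ W) :=
    (LinearEquiv.finrank_eq (Subspace.quotEquivAnnihilator W)).symm
  have h3 : finrank ℂ W ≤ 2 * n := by
    have := Submodule.finrank_le W
    rwa [Module.finrank_fin_fun ℂ] at this
  rw [h2]
  omega

/-! ### The component bilinear forms -/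

/-- The pairing between the `p`-th and `rev p`-th components induced by a form on the big space. -/
noncomputable def cB (n : ℕ) (B : LinearMap.BilinForm ℂ (Fin (2 * n - 1) → Vs n))
    (p : Fin (2 * n - 1)) : LinearMap.BilinForm ℂ (Vs n) :=
  LinearMap.mk₂ ℂ (fun v w => B (Pi.single p v) (Pi.single p.rev w))
    (fun v v' w => by simp only [Pi.single_add, map_add, LinearMap.add_apply])
    (fun a v w => by simp only [Pi.single_smul, map_smul, LinearMap.smul_apply, smul_eq_mul,
      RingHom.id_apply])
    (fun v w w' => by simp only [Pi.single_add, map_add])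
    (fun a v w => by simp only [Pi.single_smul, map_smul, smul_eq_mul, RingHom.id_apply])

lemma cB_apply {n : ℕ} (B : LinearMap.BilinForm ℂ (Fin (2 * n - 1) → Vs n))
    (p : Fin (2 * n - 1)) (v w : Vs n) :
    cB n B p v w = B (Pi.single p v) (Pi.single p.rev w) := rfl

lemma cB_rev {n : ℕ} {I : Finset ℕ} {B : LinearMap.BilinForm ℂ (Fin (2 * n - 1) → Vs n)}
    (hB : GoodForm n I B) (p : Fin (2 * n - 1)) (v w : Vs n) :
    cB n B p.rev v w = - cB n B p w v := by
  rw [cB_apply, cB_apply, Fin.rev_rev]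
  exact hB.2.1 _ _

lemma B_expand {n : ℕ} {I : Finset ℕ} {B : LinearMap.BilinForm ℂ (Fin (2 * n - 1) → Vs n)}
    (hn : 2 ≤ n) (hB : GoodForm n I B) (x y : Fin (2 * n - 1) → Vs n) :
    B x y = ∑ p : Fin (2 * n - 1), cB n B p (x p) (y p.rev) := by
  conv_lhs => rw [← Finset.univ_sum_single x]
  rw [map_sum, LinearMap.sum_apply]
  refine Finset.sum_congr rfl (fun p _ => ?_)
  conv_lhs => rw [← Finset.univ_sum_single y]
  rw [map_sum, Finset.sum_eq_single p.rev]
  · rfl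
  · intro q _ hq
    refine hB.2.2.1 p q ?_ _ _
    intro hsum
    apply hq
    apply Fin.ext
    rw [Fin.val_rev]
    have := p.isLt
    have := q.isLt
    omega
  · intro h
    exact absurd (Finset.mem_univ _) h

lemma cB_sep_left {n : ℕ} {I : Finset ℕ} {B : LinearMap.BilinForm ℂ (Fin (2 * n - 1) → Vs n)}
    (hn : 2 ≤ n) (hB : GoodForm n I B) (p : Fin (2 * n - 1)) :
    ∀ v : Vs n, (∀ w, cB n B p v w = 0) → v = 0 := by
  intro v hv
  have h0 : Pi.single p v = (0 : Fin (2 * n - 1) → Vs n) := by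
    refine hB.1 _ (fun m => ?_)
    rw [B_expand hn hB]
    refine Finset.sum_eq_zero (fun q _ => ?_)
    rcases eq_or_ne q p with rfl | hq
    · rw [Pi.single_eq_same]
      exact hv _
    · rw [Pi.single_eq_of_ne hq]
      simp
  simpa using congrFun h0 p

lemma cB_sep_right {n : ℕ} {I : Finset ℕ} {B : LinearMap.BilinForm ℂ (Fin (2 * n - 1) → Vs n)}
    (hn : 2 ≤ n) (hB : GoodForm n I B) (p : Fin (2 * n - 1)) :
    ∀ w : Vs n, (∀ v, cB n B p v w = 0) → w = 0 := by
  intro w hw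
  refine cB_sep_left hn hB p.rev w (fun v => ?_)
  rw [cB_rev hB, hw v, neg_zero]

lemma double_orthogonal {n : ℕ} {I : Finset ℕ} {B : LinearMap.BilinForm ℂ (Fin (2 * n - 1) → Vs n)}
    (hn : 2 ≤ n) (hB : GoodForm n I B) (p : Fin (2 * n - 1)) (W : Submodule ℂ (Vs n)) :
    (cB n B p.rev).orthogonal ((cB n B p).orthogonal W) = W := by
  have hle : W ≤ (cB n B p.rev).orthogonal ((cB n B p).orthogonal W) := by
    intro w hw
    rw [LinearMap.BilinForm.mem_orthogonal_iff]
    intro u hu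
    rw [cB_rev hB]
    have := (LinearMap.BilinForm.mem_orthogonal_iff.mp hu) w hw
    rw [this, neg_zero]
  have hrk : finrank ℂ ((cB n B p.rev).orthogonal ((cB n B p).orthogonal W)) = finrank ℂ W := by
    rw [finrank_orthogonal _ (cB_sep_right hn hB p.rev),
        finrank_orthogonal _ (cB_sep_right hn hB p)]
    have h3 : finrank ℂ W ≤ 2 * n := by
      have := Submodule.finrank_le W
      rwa [Module.finrank_fin_fun ℂ] at this
    omega
  exact (Submodule.eq_of_le_of_finrank_le hle hrk.le).symm

/-! ### Lagrangian condition componentwise -/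

lemma lagrangian_component {n : ℕ} {I : Finset ℕ}
    {B : LinearMap.BilinForm ℂ (Fin (2 * n - 1) → Vs n)} (hn : 2 ≤ n) (hB : GoodForm n I B)
    {Nt : Fin (2 * n - 1) → Submodule ℂ (Vs n)}
    (h : Submodule.pi Set.univ Nt = B.orthogonal (Submodule.pi Set.univ Nt))
    (p : Fin (2 * n - 1)) :
    Nt p.rev = (cB n B p).orthogonal (Nt p) := by
  ext w
  rw [LinearMap.BilinForm.mem_orthogonal_iff]
  constructor
  · intro hw v hv
    have hsw : Pi.single p.rev w ∈ Submodule.pi Set.univ Nt := single_mem_pi hw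
    rw [h, LinearMap.BilinForm.mem_orthogonal_iff] at hsw
    exact hsw _ (single_mem_pi hv)
  · intro hw
    have hmem : Pi.single p.rev w ∈ B.orthogonal (Submodule.pi Set.univ Nt) := by
      rw [LinearMap.BilinForm.mem_orthogonal_iff]
      intro x hx
      rw [B_expand hn hB]
      refine Finset.sum_eq_zero (fun q _ => ?_)
      rcases eq_or_ne q p with rfl | hq
      · rw [Pi.single_eq_same]
        have := hw (x q) (Submodule.mem_pi.mp hx q (Set.mem_univ _))
        exact this
      · rw [Pi.single_eq_of_ne (fun hh => hq (Fin.rev_injective hh))]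
        simp
    rw [← h] at hmem
    have := Submodule.mem_pi.mp hmem p.rev (Set.mem_univ _)
    rwa [Pi.single_eq_same] at this

lemma lagrangian_of_components {n : ℕ} {I : Finset ℕ}
    {B : LinearMap.BilinForm ℂ (Fin (2 * n - 1) → Vs n)} (hn : 2 ≤ n) (hB : GoodForm n I B)
    {Nt : Fin (2 * n - 1) → Submodule ℂ (Vs n)}
    (h : ∀ p : Fin (2 * n - 1), Nt p.rev = (cB n B p).orthogonal (Nt p)) :
    Submodule.pi Set.univ Nt = B.orthogonal (Submodule.pi Set.univ Nt) := by
  ext m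
  rw [LinearMap.BilinForm.mem_orthogonal_iff]
  constructor
  · intro hm x hx
    rw [B_expand hn hB]
    refine Finset.sum_eq_zero (fun p _ => ?_)
    have h1 : m p.rev ∈ (cB n B p).orthogonal (Nt p) := by
      rw [← h p]
      exact Submodule.mem_pi.mp hm p.rev (Set.mem_univ _)
    rw [LinearMap.BilinForm.mem_orthogonal_iff] at h1
    have := h1 (x p) (Submodule.mem_pi.mp hx p (Set.mem_univ _))
    exact this
  · intro hm
    rw [Submodule.mem_pi]
    intro q _
    have h2 := h q.rev
    rw [Fin.rev_rev] at h2
    rw [h2, LinearMap.BilinForm.mem_orthogonal_iff]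
    intro v hv
    have hx := hm (Pi.single q.rev v) (single_mem_pi hv)
    rw [B_expand hn hB] at hx
    rw [Finset.sum_eq_single q.rev (fun b _ hb => by rw [Pi.single_eq_of_ne hb]; simp)
      (fun hb => absurd (Finset.mem_univ _) hb)] at hx
    rwa [Pi.single_eq_same, Fin.rev_rev] at hx

end Aux

section Aux2

open LinearMap Module

lemma mem_Iprime_iff_of_le {n : ℕ} (hn : 2 ≤ n) (I : Finset ℕ)
    (hI : ∀ i ∈ I, 1 ≤ i ∧ i ≤ n - 1) {k : ℕ} (hk : k ≤ n - 1) :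
    k ∈ Iprime n I ↔ k ∈ I := by
  simp only [Iprime, Finset.mem_union, Finset.mem_image]
  constructor
  · rintro (h | ⟨i, hi, rfl⟩)
    · exact h
    · have := hI i hi
      omega
  · exact Or.inl

lemma fdeg_Iprime {n : ℕ} (hn : 2 ≤ n) (I : Finset ℕ)
    (hI : ∀ i ∈ I, 1 ≤ i ∧ i ≤ n - 1) {k : ℕ} (hk : k ≤ n - 1) :
    fdeg n (Iprime n I) k = fdeg n I k := by
  unfold fdeg
  by_cases h : k ∈ I
  · rw [if_pos h, if_pos ((mem_Iprime_iff_of_le hn I hI hk).mpr h)]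
  · rw [if_neg h, if_neg (fun hh => h ((mem_Iprime_iff_of_le hn I hI hk).mp hh))]

lemma mem_Iprime_rev {n : ℕ} (hn : 2 ≤ n) (I : Finset ℕ)
    (hI : ∀ i ∈ I, 1 ≤ i ∧ i ≤ n - 1) {p : ℕ} (h1 : 1 ≤ p) (h2 : p ≤ 2 * n - 2) :
    2 * n - 1 - p ∈ Iprime n I ↔ p ∈ Iprime n I := by
  simp only [Iprime, Finset.mem_union, Finset.mem_image]
  constructor
  · rintro (h | ⟨i, hi, hieq⟩)
    · right
      exact ⟨2 * n - 1 - p, h, by have := hI _ h; omega⟩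
    · left
      have h3 := hI i hi
      have : i = p := by omega
      rwa [← this]
  · rintro (h | ⟨i, hi, rfl⟩)
    · right
      exact ⟨p, h, rfl⟩
    · left
      have h3 := hI i hi
      have : 2 * n - 1 - (2 * n - 1 - i) = i := by omega
      rwa [this]

/-- The compatibility condition of a good form, stated with `Fin` indices. -/
lemma compat {n : ℕ} {I : Finset ℕ} {B : LinearMap.BilinForm ℂ (Fin (2 * n - 1) → Vs n)}
    (hn : 2 ≤ n) (hB : GoodForm n I B) (J J' : Fin (2 * n - 1))
    (h1 : 1 ≤ J.1) (h2 : J.1 ≤ 2 * n - 2) (hJ' : J'.1 + 1 = J.1) (v w : Vs n) :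
    cB n B J (fdeg n (Iprime n I) J.1 v) w
      + cB n B J' v (fdeg n (Iprime n I) (2 * n - 1 - J.1) w) = 0 := by
  have hc := hB.2.2.2.2 J.1 h1 h2 v w
  have hJlt := J.isLt
  have eJ : (⟨J.1, by omega⟩ : Fin (2 * n - 1)) = J := Fin.ext rfl
  have eA : (⟨2 * n - 2 - J.1, by omega⟩ : Fin (2 * n - 1)) = J.rev := by
    apply Fin.ext
    simp only [Fin.val_rev, Fin.val_mk]
    omega
  have eB : (⟨J.1 - 1, by omega⟩ : Fin (2 * n - 1)) = J' := by
    apply Fin.ext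
    simp only [Fin.val_mk]
    omega
  have eC : (⟨2 * n - 1 - J.1, by omega⟩ : Fin (2 * n - 1)) = J'.rev := by
    apply Fin.ext
    simp only [Fin.val_rev, Fin.val_mk]
    omega
  rw [eJ, eA, eB, eC] at hc
  exact hc

end Aux2

section Aux3

open LinearMap Module

/-- Signs for the standard good form. -/
noncomputable def eps (n : ℕ) (p : Fin (2 * n - 1)) (a : Fin (2 * n)) : ℂ :=
  (-1) ^ (p.1 + n - 1) * (if (a : ℕ) < n then 1 else -1)

lemma eps_ne_zero {n : ℕ} (p : Fin (2 * n - 1)) (a : Fin (2 * n)) : eps n p a ≠ 0 := by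
  unfold eps
  apply mul_ne_zero
  · exact pow_ne_zero _ (by norm_num)
  · split <;> norm_num

lemma eps_rev {n : ℕ} (hn : 1 ≤ n) (p : Fin (2 * n - 1)) (a : Fin (2 * n)) :
    eps n p.rev a.rev = - eps n p a := by
  unfold eps
  have hp := p.isLt
  have ha := a.isLt
  rw [Fin.val_rev, Fin.val_rev,
    neg_one_pow_congr_mod (show (2 * n - 1 - (p.1 + 1) + n - 1) % 2 = (p.1 + n - 1) % 2 by omega)]
  rcases lt_or_ge (a : ℕ) n with h | h
  · rw [if_pos h, if_neg (show ¬(2 * n - ((a : ℕ) + 1) < n) from by omega)]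
    ring
  · rw [if_neg (show ¬((a : ℕ) < n) from by omega),
      if_pos (show 2 * n - ((a : ℕ) + 1) < n from by omega)]
    ring

lemma eps_succ {n : ℕ} (p q : Fin (2 * n - 1)) (h : q.1 + 1 = p.1) (a : Fin (2 * n)) :
    eps n p a = - eps n q a := by
  unfold eps
  have hp := p.isLt
  have : p.1 + n - 1 = (q.1 + n - 1) + 1 := by omega
  rw [this, pow_succ]
  ring

/-- The standard good form. -/
noncomputable def Bstd (n : ℕ) : LinearMap.BilinForm ℂ (Fin (2 * n - 1) → Vs n) :=
  LinearMap.mk₂ ℂ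
    (fun x y => ∑ p : Fin (2 * n - 1), ∑ a : Fin (2 * n), eps n p a * (x p a * y p.rev a.rev))
    (fun x x' y => by simp [add_mul, mul_add, Finset.sum_add_distrib])
    (fun c x y => by simp [Finset.mul_sum, mul_assoc, mul_left_comm, mul_comm])
    (fun x y y' => by simp [mul_add, Finset.sum_add_distrib])
    (fun c x y => by simp [Finset.mul_sum, mul_assoc, mul_left_comm, mul_comm])

lemma Bstd_apply {n : ℕ} (x y : Fin (2 * n - 1) → Vs n) :
    Bstd n x y = ∑ p : Fin (2 * n - 1), ∑ a : Fin (2 * n), eps n p a * (x p a * y p.rev a.rev) :=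
  rfl

lemma Bstd_single_rev {n : ℕ} (p : Fin (2 * n - 1)) (v w : Vs n) :
    Bstd n (Pi.single p v) (Pi.single p.rev w) = ∑ a : Fin (2 * n), eps n p a * (v a * w a.rev) := by
  rw [Bstd_apply, Finset.sum_eq_single p]
  · rw [Pi.single_eq_same, Pi.single_eq_same]
  · intro q _ hq
    rw [Pi.single_eq_of_ne hq]
    simp
  · intro h
    exact absurd (Finset.mem_univ _) h

lemma Bstd_single_ne {n : ℕ} (p q : Fin (2 * n - 1)) (h : q ≠ p.rev) (v w : Vs n) :
    Bstd n (Pi.single p v) (Pi.single q w) = 0 := by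
  rw [Bstd_apply]
  refine Finset.sum_eq_zero (fun r _ => ?_)
  rcases eq_or_ne r p with rfl | hr
  · rw [Pi.single_eq_of_ne (fun hh => h hh.symm)]
    simp
  · rw [Pi.single_eq_of_ne hr]
    simp

lemma Bstd_single_right {n : ℕ} (x : Fin (2 * n - 1) → Vs n) (p : Fin (2 * n - 1))
    (a : Fin (2 * n)) :
    Bstd n x (Pi.single p.rev (Pi.single a.rev (1 : ℂ))) = eps n p a * x p a := by
  rw [Bstd_apply, Finset.sum_eq_single p]
  · rw [Pi.single_eq_same, Finset.sum_eq_single a]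
    · rw [Pi.single_eq_same, mul_one]
    · intro b _ hb
      rw [Pi.single_eq_of_ne (fun hh => hb (Fin.rev_injective hh))]
      simp
    · intro h
      exact absurd (Finset.mem_univ _) h
  · intro q _ hq
    rw [Pi.single_eq_of_ne (fun hh => hq (Fin.rev_injective hh))]
    simp
  · intro h
    exact absurd (Finset.mem_univ _) h

lemma goodForm_Bstd {n : ℕ} (hn : 2 ≤ n) (I : Finset ℕ)
    (hI : ∀ i ∈ I, 1 ≤ i ∧ i ≤ n - 1) : GoodForm n I (Bstd n) := by
  refine ⟨?_, ?_, ?_, ?_, ?_⟩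
  · -- nondegenerate
    intro v hv
    funext p a
    have h := hv (Pi.single p.rev (Pi.single a.rev (1 : ℂ)))
    rw [Bstd_single_right] at h
    have := (mul_eq_zero.mp h).resolve_left (eps_ne_zero p a)
    simpa using this
  · -- antisymmetric
    intro v w
    have key : Bstd n w v = - Bstd n v w := by
      rw [Bstd_apply, Bstd_apply, ← Finset.sum_neg_distrib]
      refine Fintype.sum_equiv Fin.revPerm _ _ (fun p => ?_)
      rw [← Finset.sum_neg_distrib]
      refine Fintype.sum_equiv Fin.revPerm _ _ (fun a => ?_)
      show eps n p a * (w p a * v p.rev a.rev)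
        = -(eps n p.rev a.rev * (v p.rev a.rev * w p.rev.rev a.rev.rev))
      rw [Fin.rev_rev, Fin.rev_rev, eps_rev (by omega)]
      ring
    rw [key, neg_neg]
  · -- cross orthogonality
    intro p q hpq v w
    refine Bstd_single_ne p q (fun h => hpq ?_) v w
    subst h
    rw [Fin.val_rev]
    have := p.isLt
    omega
  · -- restriction to omegaV
    intro h v w
    have hrev : (⟨n - 1, h⟩ : Fin (2 * n - 1)).rev = ⟨n - 1, h⟩ := by
      apply Fin.ext
      simp only [Fin.val_rev, Fin.val_mk]
      omega
    have hb := Bstd_single_rev (⟨n - 1, h⟩ : Fin (2 * n - 1)) v w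
    rw [hrev] at hb
    rw [hb]
    show _ = ∑ a : Fin (2 * n), (if (a : ℕ) < n then (1 : ℂ) else -1) * (v a * w a.rev)
    refine Finset.sum_congr rfl (fun a _ => ?_)
    unfold eps
    rw [show ((⟨n - 1, h⟩ : Fin (2 * n - 1)) : ℕ) + n - 1 = n - 1 + n - 1 from rfl,
      show ((-1 : ℂ)) ^ (n - 1 + n - 1) = 1
      from Even.neg_one_pow ⟨n - 1, by omega⟩, one_mul]
  · -- compatibility
    intro p hp1 hp2 x y
    have c1 : (⟨2 * n - 2 - p, by omega⟩ : Fin (2 * n - 1))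
        = (⟨p, by omega⟩ : Fin (2 * n - 1)).rev := by
      apply Fin.ext
      simp only [Fin.val_rev, Fin.val_mk]
      omega
    have c2 : (⟨2 * n - 1 - p, by omega⟩ : Fin (2 * n - 1))
        = (⟨p - 1, by omega⟩ : Fin (2 * n - 1)).rev := by
      apply Fin.ext
      simp only [Fin.val_rev, Fin.val_mk]
      omega
    rw [c1, c2, Bstd_single_rev, Bstd_single_rev, ← Finset.sum_add_distrib]
    refine Finset.sum_eq_zero (fun a _ => ?_)
    have hepss : eps n (⟨p, by omega⟩ : Fin (2 * n - 1)) a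
        = - eps n (⟨p - 1, by omega⟩ : Fin (2 * n - 1)) a :=
      eps_succ _ _ (by simp only [Fin.val_mk]; omega) a
    have hrevval : (a.rev : ℕ) = 2 * n - 1 - (a : ℕ) := by
      simp only [Fin.val_rev]
      have := a.isLt
      omega
    by_cases hmem : p ∈ Iprime n I
    · have hmem2 : 2 * n - 1 - p ∈ Iprime n I := (mem_Iprime_rev hn I hI hp1 hp2).mpr hmem
      simp only [fdeg]
      rw [if_pos hmem, if_pos hmem2]
      by_cases ha : (a : ℕ) = p
      · rw [show prK (2 * n) {b | (b : ℕ) = p} x a = 0 from if_pos ha,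
          show prK (2 * n) {b | (b : ℕ) = 2 * n - 1 - p} y a.rev = 0
            from if_pos (by rw [Set.mem_setOf_eq, hrevval, ha])]
        ring
      · rw [show prK (2 * n) {b | (b : ℕ) = p} x a = x a from if_neg ha,
          show prK (2 * n) {b | (b : ℕ) = 2 * n - 1 - p} y a.rev = y a.rev
            from if_neg (by rw [Set.mem_setOf_eq, hrevval]; have := a.isLt; omega)]
        rw [hepss]
        ring
    · have hmem2 : 2 * n - 1 - p ∉ Iprime n I :=
        fun hh => hmem ((mem_Iprime_rev hn I hI hp1 hp2).mp hh)
      simp only [fdeg]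
      rw [if_neg hmem, if_neg hmem2]
      rw [hepss]
      simp only [LinearMap.id_coe, id_eq]
      ring

end Aux3

section Aux4

open LinearMap Module

/-- The candidate Lagrangian subrepresentation attached to a point of `SpF`. -/
noncomputable def NtOf (n : ℕ) (B : LinearMap.BilinForm ℂ (Fin (2 * n - 1) → Vs n))
    (Vt : Fin n → Submodule ℂ (Vs n)) (q : Fin (2 * n - 1)) : Submodule ℂ (Vs n) :=
  if h : q.1 < n then Vt ⟨q.1, h⟩
  else (cB n B q.rev).orthogonal
    (Vt ⟨q.rev.1, by have h1 := Fin.val_rev q; have h2 := q.isLt; omega⟩)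

lemma NtOf_lt {n : ℕ} (B : LinearMap.BilinForm ℂ (Fin (2 * n - 1) → Vs n))
    (Vt : Fin n → Submodule ℂ (Vs n)) (q : Fin (2 * n - 1)) (hq : q.1 < n)
    (k : Fin n) (hk : (k : ℕ) = q.1) : NtOf n B Vt q = Vt k := by
  unfold NtOf
  rw [dif_pos hq]
  exact congrArg Vt (Fin.ext hk.symm)

lemma NtOf_ge {n : ℕ} (B : LinearMap.BilinForm ℂ (Fin (2 * n - 1) → Vs n))
    (Vt : Fin n → Submodule ℂ (Vs n)) (q : Fin (2 * n - 1)) (hq : ¬ q.1 < n)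
    (k : Fin n) (hk : (k : ℕ) = 2 * n - 2 - q.1) :
    NtOf n B Vt q = (cB n B q.rev).orthogonal (Vt k) := by
  unfold NtOf
  rw [dif_neg hq]
  refine congrArg _ (congrArg Vt (Fin.ext ?_))
  simp only [Fin.val_mk, Fin.val_rev]
  have := q.isLt
  omega

/-- The key componentwise Lagrangian property of `NtOf`. -/
lemma NtOf_key {n : ℕ} {I : Finset ℕ} {B : LinearMap.BilinForm ℂ (Fin (2 * n - 1) → Vs n)}
    (hn : 2 ≤ n) (hB : GoodForm n I B) {Vt : Fin n → Submodule ℂ (Vs n)}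
    (hVt : Vt ∈ SpF n I) (p : Fin (2 * n - 1)) :
    NtOf n B Vt p.rev = (cB n B p).orthogonal (NtOf n B Vt p) := by
  obtain ⟨hdim, hsub, hlagV⟩ := hVt
  have hp2 := p.isLt
  have hprev : (p.rev : ℕ) = 2 * n - 2 - p.1 := by
    simp only [Fin.val_rev]; omega
  rcases lt_trichotomy (p.1) (n - 1) with hp | hp | hp
  · -- p.1 < n-1 : rev has large index
    have h1 : ¬ (p.rev : ℕ) < n := by omega
    have hlt : p.1 < n := by omega
    rw [NtOf_ge B Vt p.rev h1 ⟨p.1, hlt⟩ (by simp only [Fin.val_mk]; omega),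
        Fin.rev_rev, NtOf_lt B Vt p hlt ⟨p.1, hlt⟩ rfl]
  · -- p.1 = n-1 : middle
    have hrev : p.rev = p := by
      apply Fin.ext; omega
    have hpn : p.1 < n := by omega
    have hn1 : n - 1 < n := by omega
    rw [hrev, NtOf_lt B Vt p hpn ⟨n - 1, hn1⟩ (by simp only [Fin.val_mk]; omega)]
    have homega : ∀ v w, cB n B p v w = omegaV n v w := by
      intro v w
      rw [cB_apply, hrev]
      have hpeq : p = (⟨n - 1, by omega⟩ : Fin (2 * n - 1)) := by
        apply Fin.ext; simp only [Fin.val_mk]; omega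
      rw [hpeq]
      exact hB.2.2.2.1 (by omega) v w
    rw [orthogonal_congr homega]
    exact hlagV hn1
  · -- p.1 > n-1 : use double orthogonality
    have h1 : (p.rev : ℕ) < n := by omega
    have h2 : ¬ p.1 < n := by omega
    have h3 : 2 * n - 2 - p.1 < n := by omega
    rw [NtOf_lt B Vt p.rev h1 ⟨2 * n - 2 - p.1, h3⟩ (by simp only [Fin.val_mk]; omega),
        NtOf_ge B Vt p h2 ⟨2 * n - 2 - p.1, h3⟩ rfl]
    have hdo := double_orthogonal hn hB p.rev (Vt ⟨2 * n - 2 - p.1, h3⟩)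
    rw [Fin.rev_rev] at hdo
    exact hdo.symm

end Aux4

theorem lagrangian_subreps_biject_with_sympl_flag (n : ℕ) (hn : 2 ≤ n)
    (I : Finset ℕ) (hI : ∀ i ∈ I, 1 ≤ i ∧ i ≤ n - 1) :
    (∃ B : LinearMap.BilinForm ℂ (Fin (2 * n - 1) → Vs n), GoodForm n I B) ∧
    (∀ B : LinearMap.BilinForm ℂ (Fin (2 * n - 1) → Vs n), GoodForm n I B →
      Set.BijOn
        (fun (Nt : Fin (2 * n - 1) → Submodule ℂ (Vs n)) (k : Fin n) =>
          Nt ⟨k.1, by have := k.isLt; omega⟩)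
        {Nt : Fin (2 * n - 1) → Submodule ℂ (Vs n) |
          (∀ p : ℕ, ∀ hp : p + 1 < 2 * n - 1,
            (Nt ⟨p, by omega⟩).map (fdeg n (Iprime n I) (p + 1)) ≤ Nt ⟨p + 1, hp⟩) ∧
          (∀ p : Fin (2 * n - 1), finrank ℂ ↥(Nt p) = p.1 + 1) ∧
          Submodule.pi Set.univ Nt = B.orthogonal (Submodule.pi Set.univ Nt)}
        (SpF n I)) := by
  constructor
  · exact ⟨Bstd n, goodForm_Bstd hn I hI⟩
  intro B hB
  refine ⟨?maps, ?inj, ?surj⟩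
  · -- MapsTo
    rintro Nt ⟨hsub, hdim, hlag⟩
    refine ⟨fun k => hdim _, fun k hk => ?_, fun h => ?_⟩
    · rw [← fdeg_Iprime hn I hI (show k + 1 ≤ n - 1 by omega)]
      exact hsub k (by omega)
    · -- the middle space is omegaV-Lagrangian
      have hmid : n - 1 < 2 * n - 1 := by omega
      have hp := lagrangian_component hn hB hlag ⟨n - 1, hmid⟩
      have hrev : (⟨n - 1, hmid⟩ : Fin (2 * n - 1)).rev = ⟨n - 1, hmid⟩ := by
        apply Fin.ext
        simp only [Fin.val_rev, Fin.val_mk]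
        omega
      rw [hrev] at hp
      have homega : ∀ v w, cB n B ⟨n - 1, hmid⟩ v w = omegaV n v w := by
        intro v w
        rw [cB_apply, hrev]
        exact hB.2.2.2.1 hmid v w
      rw [orthogonal_congr homega] at hp
      exact hp
  · -- InjOn
    rintro Nt ⟨_, _, hlag⟩ Nt' ⟨_, _, hlag'⟩ heq
    funext q
    have hq2 := q.isLt
    have hqrev : (q.rev : ℕ) = 2 * n - 2 - q.1 := by
      simp only [Fin.val_rev]; omega
    rcases lt_or_ge q.1 n with hq | hq
    · exact congrFun heq ⟨q.1, hq⟩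
    · have h1 := lagrangian_component hn hB hlag q.rev
      have h2 := lagrangian_component hn hB hlag' q.rev
      rw [Fin.rev_rev] at h1 h2
      rw [h1, h2]
      have hlt : (q.rev : ℕ) < n := by omega
      have := congrFun heq ⟨(q.rev : ℕ), hlt⟩
      exact congrArg _ this
  · -- SurjOn
    intro Vt hVt
    obtain ⟨hdim, hsub, hlagV⟩ := hVt
    have key := NtOf_key hn hB (Vt := Vt) ⟨hdim, hsub, hlagV⟩
    refine ⟨NtOf n B Vt, ⟨?_, ?_, ?_⟩, ?_⟩
    · -- subrepresentation property
      intro p hp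
      rcases lt_or_ge (p + 1) n with hlt | hge
      · have e1 : p < n := by omega
        rw [NtOf_lt B Vt ⟨p, by omega⟩ e1 ⟨p, e1⟩ rfl,
            NtOf_lt B Vt ⟨p + 1, hp⟩ hlt ⟨p + 1, hlt⟩ rfl,
            fdeg_Iprime hn I hI (show p + 1 ≤ n - 1 by omega)]
        exact hsub p hlt
      · -- upper half
        have hk1 : 2 * n - 3 - p + 1 < 2 * n - 1 := by omega
        have hk0 : 2 * n - 3 - p < 2 * n - 1 := by omega
        have hkn : 2 * n - 3 - p + 1 < n := by omega
        have hkn' : 2 * n - 3 - p < n := by omega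
        have eP : (⟨p, by omega⟩ : Fin (2 * n - 1))
            = (⟨2 * n - 3 - p + 1, hk1⟩ : Fin (2 * n - 1)).rev := by
          apply Fin.ext
          simp only [Fin.val_rev, Fin.val_mk]
          omega
        have eQ : (⟨p + 1, hp⟩ : Fin (2 * n - 1))
            = (⟨2 * n - 3 - p, hk0⟩ : Fin (2 * n - 1)).rev := by
          apply Fin.ext
          simp only [Fin.val_rev, Fin.val_mk]
          omega
        rw [eP, eQ, key ⟨2 * n - 3 - p + 1, hk1⟩, key ⟨2 * n - 3 - p, hk0⟩,
            NtOf_lt B Vt ⟨2 * n - 3 - p + 1, hk1⟩ hkn ⟨2 * n - 3 - p + 1, hkn⟩ rfl,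
            NtOf_lt B Vt ⟨2 * n - 3 - p, hk0⟩ hkn' ⟨2 * n - 3 - p, hkn'⟩ rfl]
        rintro x ⟨w, hw, rfl⟩
        rw [LinearMap.BilinForm.mem_orthogonal_iff]
        intro v hv
        have hcomp := compat hn hB ⟨2 * n - 3 - p + 1, hk1⟩ ⟨2 * n - 3 - p, hk0⟩
          (show 1 ≤ 2 * n - 3 - p + 1 by omega) (show 2 * n - 3 - p + 1 ≤ 2 * n - 2 by omega)
          rfl v w
        have e2 : 2 * n - 1 - ((⟨2 * n - 3 - p + 1, hk1⟩ : Fin (2 * n - 1)) : ℕ) = p + 1 := by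
          simp only [Fin.val_mk]
          omega
        rw [e2] at hcomp
        have e1 : ((⟨2 * n - 3 - p + 1, hk1⟩ : Fin (2 * n - 1)) : ℕ) = 2 * n - 3 - p + 1 :=
          Fin.val_mk hk1
        rw [e1] at hcomp
        have hfv : fdeg n (Iprime n I) (2 * n - 3 - p + 1) v ∈ Vt ⟨2 * n - 3 - p + 1, hkn⟩ := by
          rw [fdeg_Iprime hn I hI (show 2 * n - 3 - p + 1 ≤ n - 1 by omega)]
          exact hsub (2 * n - 3 - p) hkn (Submodule.mem_map_of_mem hv)
        have hzero : cB n B ⟨2 * n - 3 - p + 1, hk1⟩ (fdeg n (Iprime n I) (2 * n - 3 - p + 1) v) w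
            = 0 := by
          have hw' : w ∈ (cB n B ⟨2 * n - 3 - p + 1, hk1⟩).orthogonal
              (Vt ⟨2 * n - 3 - p + 1, hkn⟩) := hw
          rw [LinearMap.BilinForm.mem_orthogonal_iff] at hw'
          have := hw' _ hfv
          exact this
        rw [hzero, zero_add] at hcomp
        exact hcomp
    · -- dimensions
      intro q
      have hq2 := q.isLt
      by_cases hq : q.1 < n
      · rw [NtOf_lt B Vt q hq ⟨q.1, hq⟩ rfl]
        exact hdim ⟨q.1, hq⟩
      · have hlt : 2 * n - 2 - q.1 < n := by omega
        rw [NtOf_ge B Vt q hq ⟨2 * n - 2 - q.1, hlt⟩ rfl,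
            finrank_orthogonal _ (cB_sep_right hn hB q.rev), hdim ⟨2 * n - 2 - q.1, hlt⟩]
        simp only [Fin.val_mk]
        omega
    · -- Lagrangian
      exact lagrangian_of_components hn hB key
    · -- image is Vt
      funext q
      exact NtOf_lt B Vt ⟨q.1, by have := q.isLt; omega⟩ q.isLt q rfl
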